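/- Let L = GF(2^m), σ = 2^s with m/gcd(m,s) even, and p_4 ∈ L* \ (L*)^{σ+1}. If A, B, C, D ∈ L satisfy A = D^σ, B = p_4 C^σ, A^σ = D, B^σ = p_4 C, then B = C = 0, D = A^σ, and A lies in the fixed field of σ² in L. -/

import Mathlib

private lemma pow_two_pow_mul {L : Type} [Monoid L] (x : L) (a q : ℕ)
    (h : x ^ (2^a) = x) : x ^ (2^(a*q)) = x := by
  induction q with
  | zero => simp
  | succ q ih => rw [Nat.mul_succ, pow_add, pow_mul, ih, h]

private lemma pow_two_pow_gcd {L : Type} [Monoid L] (x : L) :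
    ∀ a b : ℕ, x ^ (2^a) = x → x ^ (2^b) = x → x ^ (2^(Nat.gcd a b)) = x := by
  intro a b
  induction a, b using Nat.gcd.induction with
  | H0 n => intro _ h; simpa using h
  | H1 m n hm ih =>
    intro h1 h2
    rw [Nat.gcd_rec]
    apply ih _ h1
    calc x ^ 2^(n % m) = (x ^ 2^(m * (n/m))) ^ 2^(n % m) := by
          rw [pow_two_pow_mul x m _ h1]
      _ = x ^ (2^(m * (n/m)) * 2^(n % m)) := (pow_mul x _ _).symm
      _ = x ^ 2^(m * (n/m) + n % m) := by rw [pow_add]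
      _ = x := by rw [Nat.div_add_mod n m]; exact h2

theorem stmt_19 (m s : ℕ) (hm : 1 ≤ m) (heven : Even (m / Nat.gcd m s))
    (L : Type) [Field L] [Fintype L] (hL : Fintype.card L = 2 ^ m)
    (p4 : L) (hp4 : p4 ≠ 0) (hp4' : ¬ ∃ c : L, c ≠ 0 ∧ p4 = c ^ (2 ^ s + 1))
    (A B C D : L)
    (h1 : A = D ^ (2 ^ s)) (h2 : B = p4 * C ^ (2 ^ s))
    (h3 : A ^ (2 ^ s) = D) (h4 : B ^ (2 ^ s) = p4 * C) :
    B = 0 ∧ C = 0 ∧ D = A ^ (2 ^ s) ∧ A ^ (2 ^ (2 * s)) = A := by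
  have hC : C = 0 := by
    by_contra hC
    set d := Nat.gcd m s with hd
    have hd1 : 1 ≤ d := Nat.gcd_pos_of_pos_left s hm
    set x := p4 * C ^ (2^s + 1) with hx
    have hxne : x ≠ 0 := mul_ne_zero hp4 (pow_ne_zero _ hC)
    -- x is fixed by Frobenius^s
    have hfix : x ^ (2^s) = x := by
      have key : p4 ^ (2^s) * C ^ (2^s * 2^s) = p4 * C := by
        rw [h2, mul_pow, ← pow_mul] at h4; exact h4
      have e1 : (2^s + 1) * 2^s = 2^s * 2^s + 2^s := by ring
      calc x ^ 2^s = p4 ^ 2^s * C ^ ((2^s+1) * 2^s) := by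
            rw [hx, mul_pow, ← pow_mul]
        _ = (p4 ^ 2^s * C ^ (2^s * 2^s)) * C ^ 2^s := by rw [e1, pow_add]; ring
        _ = (p4 * C) * C ^ 2^s := by rw [key]
        _ = x := by rw [hx, pow_succ]; ring
    have hfm : x ^ (2^m) = x := by rw [← hL]; exact FiniteField.pow_card x
    have hfd : x ^ (2^d) = x := pow_two_pow_gcd x m s hfm hfix
    have hxn : x ^ (2^d - 1) = 1 := by
      have h1' : x ^ (2^d - 1) * x = 1 * x := by
        rw [one_mul, ← pow_succ, Nat.sub_add_cancel (Nat.one_le_two_pow)]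
        exact hfd
      exact mul_right_cancel₀ hxne h1'
    -- gcd(2^s+1, 2^d-1) = 1
    have hcop : Nat.Coprime (2^s + 1) (2^d - 1) := by
      set g := Nat.gcd (2^s+1) (2^d-1) with hg
      have hg1 : g ∣ 2^s + 1 := Nat.gcd_dvd_left _ _
      have hg2 : g ∣ 2^d - 1 := Nat.gcd_dvd_right _ _
      have hds : d ∣ s := Nat.gcd_dvd_right m s
      have hdvd : (2^d - 1 : ℕ) ∣ 2^s - 1 := by
        obtain ⟨k, hk⟩ := hds
        have := Nat.sub_dvd_pow_sub_pow (2^d) 1 k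
        simpa [← pow_mul, ← hk] using this
      have hg3 : g ∣ 2^s - 1 := hg2.trans hdvd
      have hg4 : g ∣ 2 := by
        have : (2^s + 1) - (2^s - 1) = 2 := by
          have : 1 ≤ 2^s := Nat.one_le_two_pow
          omega
        exact this ▸ Nat.dvd_sub hg1 hg3
      have hodd : Odd (2^d - 1) := by
        have h2 : 2 ≤ 2^d := by
          calc 2 = 2^1 := (pow_one 2).symm
          _ ≤ 2^d := Nat.pow_le_pow_right (by norm_num) hd1
        have : 2 ∣ 2^d := dvd_pow_self 2 (by omega : d ≠ 0)
        rcases this with ⟨t, ht⟩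
        exact ⟨t - 1, by omega⟩
      rcases (Nat.dvd_prime Nat.prime_two).mp hg4 with h | h
      · exact h
      · exfalso
        have : (2 : ℕ) ∣ 2^d - 1 := h ▸ hg2
        rw [Nat.odd_iff] at hodd
        omega
    -- x is a (2^s+1)-st power
    have hcx : ∃ c : L, c ≠ 0 ∧ c ^ (2^s + 1) = x := by
      set n := 2^d - 1 with hn
      rcases Nat.lt_or_ge n 2 with hn2 | hn2
      · -- n = 1, so x = 1
        have hn1 : n = 1 := by
          have : 2 ≤ 2^d := by
            calc 2 = 2^1 := (pow_one 2).symm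
            _ ≤ 2^d := Nat.pow_le_pow_right (by norm_num) hd1
          omega
        refine ⟨1, one_ne_zero, ?_⟩
        rw [one_pow]
        rw [hn1, pow_one] at hxn
        exact hxn.symm
      · obtain ⟨b, -, hb⟩ := Nat.exists_mul_mod_eq_one_of_coprime hcop (by omega)
        refine ⟨x ^ b, pow_ne_zero _ hxne, ?_⟩
        rw [← pow_mul]
        have hdm : b * (2^s + 1) = n * (((2^s+1) * b) / n) + 1 := by
          have := Nat.div_add_mod ((2^s+1) * b) n
          rw [mul_comm]
          omega
        rw [hdm, pow_add, pow_mul, hxn, one_pow, pow_one, one_mul]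
    obtain ⟨c, hcne, hcx⟩ := hcx
    apply hp4'
    refine ⟨c * C⁻¹, mul_ne_zero hcne (inv_ne_zero hC), ?_⟩
    rw [mul_pow, hcx, hx, inv_pow]
    field_simp
  have hB : B = 0 := by
    rw [h2, hC, zero_pow (by positivity), mul_zero]
  refine ⟨hB, hC, h3.symm, ?_⟩
  rw [two_mul, pow_add, pow_mul, h3, ← h1]
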